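/- arXiv:2212.07149 — 3 statements merged into one kernel-verified Lean document; each statement's English description precedes it below -/
import Mathlib

section
/- (Norm monotonicity, convex case) Let f be convex and L-smooth, g proper closed convex, φ = f + g, and 0 < t ≤ 2/L. With x⁺ := prox_{tg}(x − t∇f(x)) and G(x,t) := (1/t)(x − x⁺), we have ‖G(x⁺,t)‖ ≤ d(0, ∂φ(x⁺)) ≤ ‖G(x,t)‖ ≤ d(0, ∂φ(x)). -/
open scoped RealInnerProductSpace

/-- The convex subdifferential of `φ` at `z`. -/
def subdiff {E : Type*} [NormedAddCommGroup E] [InnerProductSpace ℝ E]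
    (φ : E → ℝ) (z : E) : Set E :=
  {v | ∀ u, φ z + ⟪v, u - z⟫ ≤ φ u}

section Aux

open Filter Topology Set

variable {E : Type*} [NormedAddCommGroup E] [InnerProductSpace ℝ E] [CompleteSpace E]

/-- helper: lower bound on infDist from 0. -/
lemma le_infDist_zero' {S : Set E} (hne : S.Nonempty) {b : ℝ}
    (h : ∀ s ∈ S, b ≤ ‖s‖) : b ≤ Metric.infDist 0 S := by
  rw [Metric.infDist_eq_iInf]
  have : Nonempty S := hne.to_subtype
  exact le_ciInf fun s => by simpa [dist_zero_left] using h s s.2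

/-- gradient inequality for convex differentiable functions -/
lemma grad_ineq {f : E → ℝ} {f' x : E} (hf : HasGradientAt f f' x)
    (hconv : ConvexOn ℝ Set.univ f) (u : E) : f x + ⟪f', u - x⟫ ≤ f u := by
  set d := u - x with hd
  have hc : HasDerivAt (fun lam : ℝ => x + lam • d) d 0 := by
    simpa using ((hasDerivAt_id (0:ℝ)).smul_const d).const_add x
  have hψ : HasDerivAt (fun lam : ℝ => f (x + lam • d)) ⟪f', d⟫ 0 := by
    have h0 : HasFDerivAt f (InnerProductSpace.toDual ℝ E f') (x + (0:ℝ) • d) := by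
      simpa using hf.hasFDerivAt
    exact h0.comp_hasDerivAt (0:ℝ) hc
  have hslope := hasDerivAt_iff_tendsto_slope.mp hψ
  have hmono : 𝓝[>] (0:ℝ) ≤ 𝓝[≠] (0:ℝ) :=
    nhdsWithin_mono _ fun y hy => ne_of_gt hy
  have hev : ∀ᶠ lam in 𝓝[>] (0:ℝ),
      slope (fun lam : ℝ => f (x + lam • d)) 0 lam ≤ f u - f x := by
    filter_upwards [Ioo_mem_nhdsGT zero_lt_one] with lam hlam
    obtain ⟨h0, h1⟩ := hlam
    have hcomb : x + lam • d = (1 - lam) • x + lam • u := by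
      rw [hd]; module
    have hcvx := hconv.2 (Set.mem_univ x) (Set.mem_univ u)
      (show (0:ℝ) ≤ 1 - lam by linarith) h0.le (by ring)
    rw [← hcomb] at hcvx
    rw [smul_eq_mul, smul_eq_mul] at hcvx
    rw [slope_def_field]
    simp only [zero_smul, add_zero, sub_zero]
    rw [div_le_iff₀ h0]
    nlinarith [hcvx]
  have := le_of_tendsto (hslope.mono_left hmono) hev
  linarith

/-- prox subgradient -/
lemma prox_subgrad {g : E → ℝ} (hg : ConvexOn ℝ Set.univ g) {t : ℝ} (ht : 0 < t)
    {y p : E} (hp : IsMinOn (fun z => g z + (1 / (2 * t)) * ‖z - y‖ ^ 2) Set.univ p)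
    (u : E) : g p + ⟪(1/t) • (y - p), u - p⟫ ≤ g u := by
  rw [real_inner_smul_left]
  have key : (1/t) * ⟪y - p, u - p⟫ ≤ g u - g p := by
    refine le_of_forall_pos_le_add fun ε hε => ?_
    set N := ‖u - p‖ ^ 2 with hN
    have hN0 : (0:ℝ) ≤ N := by positivity
    set lam := min 1 (2*t*ε/(N+1)) with hlam
    have hlam0 : 0 < lam := lt_min one_pos (by positivity)
    have hlam1 : lam ≤ 1 := min_le_left _ _
    have hlamN : lam * N ≤ 2*t*ε := by
      have h1 : lam ≤ 2*t*ε/(N+1) := min_le_right _ _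
      have h2 : lam * N ≤ (2*t*ε/(N+1)) * N := by
        apply mul_le_mul_of_nonneg_right h1 hN0
      calc lam * N ≤ (2*t*ε/(N+1)) * N := h2
        _ ≤ 2*t*ε := by
          rw [div_mul_eq_mul_div, div_le_iff₀ (by positivity)]
          nlinarith
    have hCdef : (1:ℝ)/(2*t) = 1/(2*t) := rfl
    set C := 1/(2*t) with hC
    have hC0 : 0 < C := by positivity
    have hCt : 2 * C * t = 1 := by rw [hC]; field_simp
    set I := ⟪y - p, u - p⟫ with hI
    have F1 : g p + C * ‖p - y‖^2 ≤
        g (p + lam • (u - p)) + C * (‖p - y‖^2 - 2*lam*I + lam^2*N) := by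
      have hmin : g p + C * ‖p - y‖^2 ≤
          g (p + lam • (u - p)) + C * ‖p + lam • (u - p) - y‖^2 :=
        isMinOn_iff.mp hp _ (Set.mem_univ _)
      have hnorm : ‖p + lam • (u - p) - y‖^2 = ‖p - y‖^2 - 2*lam*I + lam^2*N := by
        have he : p + lam • (u - p) - y = (p - y) + lam • (u - p) := by abel
        rw [he, norm_add_sq_real, real_inner_smul_right, norm_smul, Real.norm_eq_abs,
          abs_of_pos hlam0, mul_pow]
        have : ⟪p - y, u - p⟫ = -I := by
          rw [hI, ← inner_neg_left, neg_sub]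
        rw [this]; ring
      rw [hnorm] at hmin; exact hmin
    have F2 : g (p + lam • (u - p)) ≤ (1 - lam) * g p + lam * g u := by
      have hcomb : p + lam • (u - p) = (1 - lam) • p + lam • u := by
        module
      rw [hcomb]
      exact hg.2 (Set.mem_univ p) (Set.mem_univ u)
        (show (0:ℝ) ≤ 1 - lam by linarith) hlam0.le (by ring)
    have htarget : lam * (g p + 2*C*I) ≤ lam * (g u + C*(lam*N)) := by nlinarith [F1, F2]
    have h6 : g p + 2*C*I ≤ g u + C*(lam*N) := le_of_mul_le_mul_left htarget hlam0
    have h5 : C*(lam*N) ≤ ε := by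
      calc C*(lam*N) ≤ C*(2*t*ε) := mul_le_mul_of_nonneg_left hlamN hC0.le
        _ = ε := by rw [hC]; field_simp
    have h2C : 2*C = 1/t := by rw [hC]; field_simp
    have h7 : 2*C*I = (1/t)*I := by rw [h2C]
    linarith [h6, h5, h7]
  linarith

/-- descent lemma -/
lemma descent_lemma {f : E → ℝ} {f' : E → E} {L : ℝ} (hL : 0 < L)
    (hdiff : ∀ x, HasGradientAt f (f' x) x)
    (hlip : ∀ x y, ‖f' x - f' y‖ ≤ L * ‖x - y‖) (x d : E) :
    f (x + d) ≤ f x + ⟪f' x, d⟫ + L/2 * ‖d‖^2 := by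
  set a := ⟪f' x, d⟫ with ha
  set b := L/2 * ‖d‖^2 with hb
  set h : ℝ → ℝ := fun s => f (x + s • d) - s * a - b * s^2 with hh
  have hψ : ∀ lam : ℝ, HasDerivAt h (⟪f' (x + lam • d), d⟫ - a - 2*b*lam) lam := by
    intro lam
    have hc : HasDerivAt (fun s : ℝ => x + s • d) d lam := by
      simpa using ((hasDerivAt_id lam).smul_const d).const_add x
    have h1 : HasDerivAt (fun s : ℝ => f (x + s • d)) ⟪f' (x + lam • d), d⟫ lam := by
      exact
        (hdiff (x + lam • d)).hasFDerivAt.comp_hasDerivAt lam hc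
    have h2 : HasDerivAt (fun s : ℝ => s * a) a lam := by
      simpa using (hasDerivAt_id lam).mul_const a
    have h3 : HasDerivAt (fun s : ℝ => b * s^2) (b * (2*lam)) lam := by
      simpa using (hasDerivAt_pow 2 lam).const_mul b
    have := (h1.sub h2).sub h3
    exact this.congr_deriv (by ring)
  have hanti : AntitoneOn h (Set.Icc 0 1) := by
    apply antitoneOn_of_deriv_nonpos (convex_Icc 0 1)
    · exact fun s _ => ((hψ s).differentiableAt.continuousAt).continuousWithinAt
    · exact fun s _ => (hψ s).differentiableAt.differentiableWithinAt
    · intro s hs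
      rw [interior_Icc] at hs
      rw [(hψ s).deriv]
      have e1 : ⟪f' (x + s • d), d⟫ - a = ⟪f' (x + s • d) - f' x, d⟫ := by
        rw [inner_sub_left]
      have e2 : ⟪f' (x + s • d) - f' x, d⟫ ≤ ‖f' (x + s • d) - f' x‖ * ‖d‖ :=
        real_inner_le_norm _ _
      have e3 : ‖f' (x + s • d) - f' x‖ ≤ L * ‖s • d‖ := by
        simpa using hlip (x + s • d) x
      have e4 : ‖s • d‖ = s * ‖d‖ := by
        rw [norm_smul, Real.norm_eq_abs, abs_of_pos hs.1]
      have e5 : ‖f' (x + s • d) - f' x‖ * ‖d‖ ≤ L * s * ‖d‖ * ‖d‖ := by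
        have := mul_le_mul_of_nonneg_right e3 (norm_nonneg d)
        rw [e4] at this; linarith [this]
      rw [hb] at *
      nlinarith [e1, e2, e5, hs.1.le]
  have := hanti (Set.left_mem_Icc.mpr zero_le_one) (Set.right_mem_Icc.mpr zero_le_one)
    zero_le_one
  simp only [hh, one_smul, zero_smul, add_zero, one_pow, mul_one, zero_pow, mul_zero,
    zero_mul, sub_zero] at this
  linarith

/-- cocoercivity auxiliary -/
lemma coco_aux {f : E → ℝ} {f' : E → E} {L : ℝ} (hL : 0 < L)
    (hdiff : ∀ x, HasGradientAt f (f' x) x) (hconv : ConvexOn ℝ Set.univ f)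
    (hlip : ∀ x y, ‖f' x - f' y‖ ≤ L * ‖x - y‖) (a b : E) :
    f a + ⟪f' a, b - a⟫ + 1/(2*L) * ‖f' b - f' a‖^2 ≤ f b := by
  set Δ := f' b - f' a with hΔ
  set d := (-(1/L)) • Δ with hd
  have h1 : f (b + d) ≤ f b + ⟪f' b, d⟫ + L/2 * ‖d‖^2 := descent_lemma hL hdiff hlip b d
  have h2 : f a + ⟪f' a, (b + d) - a⟫ ≤ f (b + d) := grad_ineq (hdiff a) hconv _
  have e1 : ⟪f' a, (b + d) - a⟫ = ⟪f' a, b - a⟫ + ⟪f' a, d⟫ := by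
    rw [show (b + d) - a = (b - a) + d by abel, inner_add_right]
  have e2 : ⟪f' b, d⟫ = -(1/L) * ⟪f' b, Δ⟫ := by rw [hd, real_inner_smul_right]
  have e3 : ⟪f' a, d⟫ = -(1/L) * ⟪f' a, Δ⟫ := by rw [hd, real_inner_smul_right]
  have e4 : ‖d‖^2 = (1/L)^2 * ‖Δ‖^2 := by
    rw [hd, norm_smul, Real.norm_eq_abs, abs_neg, abs_of_pos (by positivity : (0:ℝ) < 1/L),
      mul_pow]
  have e5 : ⟪f' b, Δ⟫ - ⟪f' a, Δ⟫ = ‖Δ‖^2 := by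
    rw [← inner_sub_left, ← hΔ, real_inner_self_eq_norm_sq]
  have e6 : L/2 * ((1/L)^2 * ‖Δ‖^2) = 1/(2*L) * ‖Δ‖^2 := by field_simp
  rw [e2, e4] at h1
  rw [e1, e3] at h2
  have e7 : (1/L) * ⟪f' b, Δ⟫ - (1/L) * ⟪f' a, Δ⟫ = (1/L) * ‖Δ‖^2 := by
    rw [← mul_sub, e5]
  have e9 : 1/(2*L) * ‖Δ‖^2 = 1/2 * ((1/L) * ‖Δ‖^2) := by
    field_simp
  linarith [h1, h2, e6, e7, e9]

/-- cocoercivity -/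
lemma coco {f : E → ℝ} {f' : E → E} {L : ℝ} (hL : 0 < L)
    (hdiff : ∀ x, HasGradientAt f (f' x) x) (hconv : ConvexOn ℝ Set.univ f)
    (hlip : ∀ x y, ‖f' x - f' y‖ ≤ L * ‖x - y‖) (a b : E) :
    1/L * ‖f' a - f' b‖^2 ≤ ⟪f' a - f' b, a - b⟫ := by
  have h1 := coco_aux hL hdiff hconv hlip a b
  have h2 := coco_aux hL hdiff hconv hlip b a
  have e0 : ‖f' b - f' a‖ = ‖f' a - f' b‖ := norm_sub_rev _ _
  rw [e0] at h1
  have e1 : ⟪f' a - f' b, a - b⟫ = ⟪f' a, a - b⟫ - ⟪f' b, a - b⟫ := inner_sub_left _ _ _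
  have e2 : ⟪f' a, b - a⟫ = -⟪f' a, a - b⟫ := by
    rw [show b - a = -(a - b) by abel, inner_neg_right]
  have e4 : 1/L * ‖f' a - f' b‖^2 = 2 * (1/(2*L) * ‖f' a - f' b‖^2) := by
    field_simp
  linarith [h1, h2, e1, e2, e4]

lemma subdiff_nonempty {E : Type*} [NormedAddCommGroup E] [InnerProductSpace ℝ E]
    [FiniteDimensional ℝ E] {φ : E → ℝ} (hconv : ConvexOn ℝ Set.univ φ)
    (hcont : Continuous φ) (x : E) : (subdiff φ x).Nonempty := by
  haveI : CompleteSpace E := FiniteDimensional.complete ℝ E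
  set S : Set (E × ℝ) := {p | φ p.1 < p.2} with hS
  have hopen : IsOpen S := isOpen_lt (hcont.comp continuous_fst) continuous_snd
  have hconvS : Convex ℝ S := by
    rintro ⟨p1, p2⟩ hp ⟨q1, q2⟩ hq a b ha hb hab
    simp only [hS, Set.mem_setOf_eq] at hp hq
    simp only [hS, Set.mem_setOf_eq, Prod.smul_mk, Prod.mk_add_mk, smul_eq_mul]
    have h1 : φ (a • p1 + b • q1) ≤ a * φ p1 + b * φ q1 :=
      hconv.2 (Set.mem_univ _) (Set.mem_univ _) ha hb hab
    have h2 : a * φ p1 + b * φ q1 < a * p2 + b * q2 := by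
      rcases eq_or_lt_of_le ha with h|h
      · have hb1 : b = 1 := by linarith
        rw [← h, hb1]
        simpa using hq
      · have h3 := mul_lt_mul_of_pos_left hp h
        have h4 := mul_le_mul_of_nonneg_left hq.le hb
        linarith
    exact lt_of_le_of_lt h1 h2
  have hxS : ((x, φ x) : E × ℝ) ∉ S := by simp [hS]
  obtain ⟨l, hl⟩ := geometric_hahn_banach_open_point hconvS hopen hxS
  set c : ℝ := l (0, 1) with hc
  have hcneg : c < 0 := by
    have h1 : ((x, φ x + 1) : E × ℝ) ∈ S := by simp [hS]
    have h2 := hl _ h1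
    have heq : ((x, φ x + 1) : E × ℝ) = (x, φ x) + (0, 1) := by
      simp [Prod.ext_iff]
    rw [heq, map_add] at h2
    linarith
  have key : ∀ z : E, l (z, φ z) ≤ l (x, φ x) := by
    intro z
    refine le_of_forall_pos_le_add fun ε hε => ?_
    set δ := ε / (-c) with hδdef
    have hδ : 0 < δ := div_pos hε (neg_pos.mpr hcneg)
    have hmem : ((z, φ z + δ) : E × ℝ) ∈ S := by simp [hS, hδ]
    have h2 := hl _ hmem
    have heq : ((z, φ z + δ) : E × ℝ) = (z, φ z) + δ • ((0:E), (1:ℝ)) := by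
      simp [Prod.ext_iff]
    rw [heq, map_add, map_smul, smul_eq_mul] at h2
    have hδc : δ * c = -ε := by
      rw [hδdef, div_mul_eq_mul_div, div_neg, mul_div_assoc, div_self hcneg.ne, mul_one]
    rw [← hc] at h2
    linarith
  set l₁ : E →L[ℝ] ℝ := l.comp (ContinuousLinearMap.inl ℝ E ℝ) with hl₁
  set v : E := (InnerProductSpace.toDual ℝ E).symm ((-c⁻¹) • l₁) with hv
  refine ⟨v, fun z => ?_⟩
  have hdec : ∀ w : E, ∀ r : ℝ, l (w, r) = l₁ w + r * c := by
    intro w r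
    have heq : ((w, r) : E × ℝ) = (w, (0:ℝ)) + r • ((0:E), (1:ℝ)) := by
      simp [Prod.ext_iff]
    rw [heq, map_add, map_smul, smul_eq_mul, ← hc]
    rfl
  have hkey := key z
  rw [hdec z (φ z), hdec x (φ x)] at hkey
  have hvw : ⟪v, z - x⟫ = (-c⁻¹) * (l₁ z - l₁ x) := by
    rw [hv, InnerProductSpace.toDual_symm_apply]
    simp only [ContinuousLinearMap.coe_smul', Pi.smul_apply, smul_eq_mul, map_sub]
    ring
  rw [hvw]
  have hinv : c⁻¹ < 0 := inv_lt_zero.mpr hcneg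
  have hcc : c * c⁻¹ = 1 := mul_inv_cancel₀ hcneg.ne
  have h5 : l₁ z - l₁ x ≤ (φ x - φ z) * c := by linarith [hkey]
  have h6 := mul_le_mul_of_nonpos_right h5 hinv.le
  have h7 : (φ x - φ z) * c * c⁻¹ = φ x - φ z := by rw [mul_assoc, hcc, mul_one]
  linarith [h6, h7]

lemma subdiff_sub_grad {E : Type*} [NormedAddCommGroup E] [InnerProductSpace ℝ E]
    [CompleteSpace E] {f g : E → ℝ} {f' z : E} (hf : HasGradientAt f f' z)
    (hg : ConvexOn ℝ Set.univ g) {s : E}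
    (hs : ∀ w, f z + g z + ⟪s, w - z⟫ ≤ f w + g w) (w : E) :
    g z + ⟪s - f', w - z⟫ ≤ g w := by
  set d := w - z with hd
  have hc : HasDerivAt (fun lam : ℝ => z + lam • d) d 0 := by
    simpa using ((hasDerivAt_id (0:ℝ)).smul_const d).const_add z
  have hψ : HasDerivAt (fun lam : ℝ => f (z + lam • d)) ⟪f', d⟫ 0 := by
    have h0 : HasFDerivAt f (InnerProductSpace.toDual ℝ E f') (z + (0:ℝ) • d) := by
      simpa using hf.hasFDerivAt
    exact h0.comp_hasDerivAt (0:ℝ) hc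
  have hslope := hasDerivAt_iff_tendsto_slope.mp hψ
  have hmono : 𝓝[>] (0:ℝ) ≤ 𝓝[≠] (0:ℝ) := nhdsWithin_mono _ fun y hy => ne_of_gt hy
  have hev : ∀ᶠ lam in 𝓝[>] (0:ℝ),
      ⟪s, d⟫ - (g w - g z) ≤ slope (fun lam : ℝ => f (z + lam • d)) 0 lam := by
    filter_upwards [Ioo_mem_nhdsGT zero_lt_one] with lam hlam
    obtain ⟨h0, h1⟩ := hlam
    have hcomb : z + lam • d = (1 - lam) • z + lam • w := by rw [hd]; module
    have hgcvx := hg.2 (Set.mem_univ z) (Set.mem_univ w)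
      (show (0:ℝ) ≤ 1 - lam by linarith) h0.le (by ring)
    rw [← hcomb, smul_eq_mul, smul_eq_mul] at hgcvx
    have hsub := hs (z + lam • d)
    have hinner : ⟪s, (z + lam • d) - z⟫ = lam * ⟪s, d⟫ := by
      rw [show (z + lam • d) - z = lam • d by abel, real_inner_smul_right]
    rw [hinner] at hsub
    rw [slope_def_field]
    simp only [zero_smul, add_zero, sub_zero]
    rw [le_div_iff₀ h0]
    nlinarith [hgcvx, hsub]
  have hlim := ge_of_tendsto (hslope.mono_left hmono) hev
  have h3 : ⟪s - f', d⟫ = ⟪s, d⟫ - ⟪f', d⟫ := inner_sub_left _ _ _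
  linarith [hlim, h3]

lemma norm_G_le_infDist {E : Type*} [NormedAddCommGroup E] [InnerProductSpace ℝ E]
    [FiniteDimensional ℝ E]
    (f : E → ℝ) (f' : E → E) (g : E → ℝ)
    (hdiff : ∀ x, HasGradientAt f (f' x) x) (hconv : ConvexOn ℝ Set.univ f)
    (hg : ConvexOn ℝ Set.univ g) {t : ℝ} (ht : 0 < t) (prox : E → E)
    (hprox : ∀ y, IsMinOn (fun z => g z + (1 / (2 * t)) * ‖z - y‖ ^ 2) Set.univ (prox y))
    (z : E) :
    ‖(1 / t) • (z - prox (z - t • f' z))‖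
      ≤ Metric.infDist 0 (subdiff (fun w => f w + g w) z) := by
  haveI : CompleteSpace E := FiniteDimensional.complete ℝ E
  set p := prox (z - t • f' z) with hpdef
  set G := (1 / t) • (z - p) with hG
  have hφconv : ConvexOn ℝ Set.univ (fun w => f w + g w) := hconv.add hg
  have hfc : Continuous f := by
    rw [continuous_iff_continuousAt]; exact fun w => (hdiff w).continuousAt
  have hgc : Continuous g :=
    continuousOn_univ.mp (hg.continuousOn isOpen_univ)
  have hne := subdiff_nonempty hφconv (hfc.add hgc) z
  apply le_infDist_zero' hne
  intro s hs
  have hu : ∀ w, g p + ⟪(1/t) • ((z - t • f' z) - p), w - p⟫ ≤ g w :=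
    fun w => prox_subgrad hg ht (hprox (z - t • f' z)) w
  have hv : ∀ w, g z + ⟪s - f' z, w - z⟫ ≤ g w :=
    subdiff_sub_grad (hdiff z) hg (fun w => hs w)
  have m1 := hv p
  have m2 := hu z
  have hA : ⟪(1/t) • ((z - t • f' z) - p), z - p⟫
      = (1/t) * ‖z - p‖^2 - ⟪f' z, z - p⟫ := by
    rw [real_inner_smul_left,
      show (z - t • f' z) - p = (z - p) - t • f' z by abel,
      inner_sub_left, real_inner_smul_left, real_inner_self_eq_norm_sq]
    field_simp
  have hB : ⟪s - f' z, p - z⟫ = -⟪s, z - p⟫ + ⟪f' z, z - p⟫ := by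
    rw [show p - z = -(z - p) by abel, inner_neg_right, inner_sub_left]
    ring
  have hkey : (1/t) * ‖z - p‖^2 ≤ ⟪s, z - p⟫ := by linarith [m1, m2, hA, hB]
  have hGnorm : ‖G‖ = (1/t) * ‖z - p‖ := by
    rw [hG, norm_smul, Real.norm_eq_abs, abs_of_pos (by positivity : (0:ℝ) < 1/t)]
  have hcs : ⟪s, z - p⟫ ≤ ‖s‖ * ‖z - p‖ := real_inner_le_norm _ _
  rw [hGnorm]
  rcases eq_or_lt_of_le (norm_nonneg (z - p)) with h0|h0
  · rw [← h0, mul_zero]; exact norm_nonneg s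
  · nlinarith [hkey, hcs, h0, ht]

lemma infDist_le_norm_G {E : Type*} [NormedAddCommGroup E] [InnerProductSpace ℝ E]
    [FiniteDimensional ℝ E]
    (f : E → ℝ) (f' : E → E) (g : E → ℝ) (L : ℝ) (hL : 0 < L)
    (hdiff : ∀ x, HasGradientAt f (f' x) x) (hconv : ConvexOn ℝ Set.univ f)
    (hlip : ∀ x y, ‖f' x - f' y‖ ≤ L * ‖x - y‖)
    (hg : ConvexOn ℝ Set.univ g) {t : ℝ} (ht : 0 < t) (htL : t ≤ 2 / L) (prox : E → E)
    (hprox : ∀ y, IsMinOn (fun z => g z + (1 / (2 * t)) * ‖z - y‖ ^ 2) Set.univ (prox y))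
    (x xplus : E) (hxplus : xplus = prox (x - t • f' x)) :
    Metric.infDist 0 (subdiff (fun w => f w + g w) xplus) ≤ ‖(1 / t) • (x - xplus)‖ := by
  haveI : CompleteSpace E := FiniteDimensional.complete ℝ E
  set G := (1 / t) • (x - xplus) with hG
  set Δ := f' x - f' xplus with hΔ
  set s₀ := G - Δ with hs₀
  have htne : (1/t) * t = 1 := by field_simp
  have hu : ∀ w, g xplus + ⟪(1/t) • ((x - t • f' x) - xplus), w - xplus⟫ ≤ g w := by
    intro w
    rw [hxplus]
    exact prox_subgrad hg ht (hprox (x - t • f' x)) w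
  have hu_eq : (1/t) • ((x - t • f' x) - xplus) = G - f' x := by
    rw [show (x - t • f' x) - xplus = (x - xplus) - t • f' x by abel, smul_sub,
      smul_smul, htne, one_smul, hG]
  have hmem : s₀ ∈ subdiff (fun w => f w + g w) xplus := by
    intro w
    have h1 := hu w
    rw [hu_eq] at h1
    have h2 := grad_ineq (hdiff xplus) hconv w
    have h3 : ⟪s₀, w - xplus⟫ = ⟪G - f' x, w - xplus⟫ + ⟪f' xplus, w - xplus⟫ := by
      rw [← inner_add_left, hs₀, hΔ]
      congr 1
      abel
    simp only []
    linarith [h1, h2, h3]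
  have hd1 : Metric.infDist 0 (subdiff (fun w => f w + g w) xplus) ≤ ‖s₀‖ := by
    have := Metric.infDist_le_dist_of_mem (x := (0:E)) hmem
    rwa [dist_zero_left] at this
  have hcoco := coco hL hdiff hconv hlip x xplus
  rw [← hΔ] at hcoco
  have htG : t • G = x - xplus := by
    rw [hG, smul_smul, show t * (1/t) = 1 by field_simp, one_smul]
  have hinner : ⟪Δ, x - xplus⟫ = t * ⟪Δ, G⟫ := by
    rw [← htG, real_inner_smul_right]
  set q := ⟪G, Δ⟫ with hq
  set n := ‖Δ‖^2 with hn
  have hqq : ⟪Δ, G⟫ = q := real_inner_comm _ _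
  rw [hinner, hqq] at hcoco
  have hn0 : (0:ℝ) ≤ n := by positivity
  have hq1 : n ≤ t * L * q := by
    have h4 := mul_le_mul_of_nonneg_left hcoco hL.le
    have e : L * (1/L * n) = n := by field_simp
    nlinarith [h4, e]
  have hq0 : (0:ℝ) ≤ q := by
    by_contra hcon
    push_neg at hcon
    have : t * L * q < 0 := mul_neg_of_pos_of_neg (mul_pos ht hL) hcon
    linarith
  have htL' : t * L ≤ 2 := (le_div_iff₀ hL).mp htL
  have hq2 : n ≤ 2 * q := by nlinarith [hq1, mul_nonneg (show (0:ℝ) ≤ 2 - t*L by linarith) hq0]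
  have hsq : ‖s₀‖^2 ≤ ‖G‖^2 := by
    rw [hs₀, norm_sub_sq_real]
    linarith [hq2]
  have hfin : ‖s₀‖ ≤ ‖G‖ := by
    nlinarith [hsq, norm_nonneg s₀, norm_nonneg G]
  exact le_trans hd1 hfin

end Aux

/-- **Norm monotonicity, convex case.** For `f` convex `L`-smooth, `g` convex,
`φ = f + g`, `0 < t ≤ 2/L` and `x⁺ = prox_{tg}(x - t∇f x)`:
`‖G(x⁺,t)‖ ≤ d(0, ∂φ(x⁺)) ≤ ‖G(x,t)‖ ≤ d(0, ∂φ(x))`. -/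
theorem pgm_norm_monotone_convex
    {E : Type*} [NormedAddCommGroup E] [InnerProductSpace ℝ E] [FiniteDimensional ℝ E]
    (f : E → ℝ) (f' : E → E) (g : E → ℝ) (L : ℝ) (hL : 0 < L)
    (hdiff : ∀ x, HasGradientAt f (f' x) x)
    (hconv : ConvexOn ℝ Set.univ f)
    (hlip : ∀ x y, ‖f' x - f' y‖ ≤ L * ‖x - y‖)
    (hg : ConvexOn ℝ Set.univ g)
    (t : ℝ) (ht : 0 < t) (htL : t ≤ 2 / L) (prox : E → E)
    (hprox : ∀ y : E, IsMinOn (fun z => g z + (1 / (2 * t)) * ‖z - y‖ ^ 2) Set.univ (prox y))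
    (x xplus : E) (hxplus : xplus = prox (x - t • f' x)) :
    ‖(1 / t) • (xplus - prox (xplus - t • f' xplus))‖
        ≤ Metric.infDist 0 (subdiff (fun z => f z + g z) xplus) ∧
      Metric.infDist 0 (subdiff (fun z => f z + g z) xplus) ≤ ‖(1 / t) • (x - xplus)‖ ∧
      ‖(1 / t) • (x - xplus)‖ ≤ Metric.infDist 0 (subdiff (fun z => f z + g z) x) := by
  refine ⟨?_, ?_, ?_⟩
  · exact norm_G_le_infDist f f' g hdiff hconv hg ht prox hprox xplus
  · exact infDist_le_norm_G f f' g L hL hdiff hconv hlip hg ht htL prox hprox x xplus hxplus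
  · rw [hxplus]
    exact norm_G_le_infDist f f' g hdiff hconv hg ht prox hprox x
end

section
/- (Fundamental proximal gradient inequality, strongly convex version) Let f be μ-strongly convex and L-smooth, g proper closed convex, φ = f + g, t > 0, and G(y,t) the proximal gradient mapping at y. Then for all x, y: φ(x) − φ(y − tG(y,t)) ≥ t(1 − (L/2)t)‖G(y,t)‖² + ⟨G(y,t), x − y⟩ + (μ/2)‖x − y‖². -/
open scoped RealInnerProductSpace
open Set Filter Topology

section Aux

variable {E : Type*} [NormedAddCommGroup E] [InnerProductSpace ℝ E] [FiniteDimensional ℝ E]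

/-- If a 1D function has derivative `D` at `0` and its slopes from `0` on `(0,1)` are
bounded by `K`, then `D ≤ K`. -/
lemma aux_deriv_le_of_slope_le {φ : ℝ → ℝ} {D K : ℝ} (hd : HasDerivAt φ D 0)
    (hs : ∀ s ∈ Set.Ioo (0:ℝ) 1, (φ s - φ 0) / s ≤ K) : D ≤ K := by
  have h1 : Tendsto (slope φ 0) (𝓝[>] 0) (𝓝 D) :=
    (hasDerivAt_iff_tendsto_slope.mp hd).mono_left
      (nhdsWithin_mono _ (fun s hs => ne_of_gt hs))
  refine le_of_tendsto h1 ?_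
  filter_upwards [Ioo_mem_nhdsGT_of_mem (Set.mem_Ico.mpr ⟨le_refl (0:ℝ), one_pos⟩)] with s hs'
  rw [slope_def_field]
  simpa [div_eq_mul_inv] using hs s hs'

lemma aux_hasDerivAt_comp_line (f : E → ℝ) (f' : E → E)
    (hdiff : ∀ x, HasGradientAt f (f' x) x) (a v : E) (s : ℝ) :
    HasDerivAt (fun s : ℝ => f (a + s • v)) ⟪f' (a + s • v), v⟫ s := by
  have hc : HasDerivAt (fun s : ℝ => a + s • v) v s := by
    simpa using ((hasDerivAt_id s).smul_const v).const_add a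
  have h := (hdiff (a + s • v)).hasFDerivAt.comp_hasDerivAt s hc
  simp [InnerProductSpace.toDual_apply_apply] at h
  exact h

/-- Descent lemma: `f b ≤ f a + ⟪∇f a, b - a⟫ + L/2 ‖b-a‖²`. -/
lemma aux_descent (f : E → ℝ) (f' : E → E) {L : ℝ} (hL : 0 < L)
    (hdiff : ∀ x, HasGradientAt f (f' x) x)
    (hlip : ∀ x y, ‖f' x - f' y‖ ≤ L * ‖x - y‖) (a b : E) :
    f b ≤ f a + ⟪f' a, b - a⟫ + L / 2 * ‖b - a‖ ^ 2 := by
  set v := b - a with hv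
  have hfc : Continuous f' := by
    have hlw : LipschitzWith (Real.toNNReal L) f' := by
      apply LipschitzWith.of_dist_le_mul
      intro x y
      rw [dist_eq_norm, dist_eq_norm, Real.coe_toNNReal L hL.le]
      exact hlip x y
    exact hlw.continuous
  have hψcont : Continuous fun s : ℝ => ⟪f' (a + s • v), v⟫ :=
    (hfc.comp (by continuity)).inner continuous_const
  have hFTC : ∫ s in (0:ℝ)..1, ⟪f' (a + s • v), v⟫
      = (fun s : ℝ => f (a + s • v)) 1 - (fun s : ℝ => f (a + s • v)) 0 := by
    exact intervalIntegral.integral_eq_sub_of_hasDerivAt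
      (fun s _ => aux_hasDerivAt_comp_line f f' hdiff a v s)
      (hψcont.intervalIntegrable 0 1)
  have hint2 : IntervalIntegrable (fun s : ℝ => ⟪f' a, v⟫ + s * (L * ‖v‖ ^ 2))
      MeasureTheory.volume 0 1 := by
    apply Continuous.intervalIntegrable
    exact continuous_const.add ((continuous_id.mul continuous_const))
  have hint3 : IntervalIntegrable (fun s : ℝ => s * (L * ‖v‖ ^ 2))
      MeasureTheory.volume 0 1 := by
    apply Continuous.intervalIntegrable
    exact continuous_id.mul continuous_const
  have hmono : ∫ s in (0:ℝ)..1, ⟪f' (a + s • v), v⟫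
      ≤ ∫ s in (0:ℝ)..1, (⟪f' a, v⟫ + s * (L * ‖v‖ ^ 2)) := by
    apply intervalIntegral.integral_mono_on zero_le_one
      (hψcont.intervalIntegrable 0 1) hint2
    intro s hs
    have h1 : ⟪f' (a + s • v), v⟫ - ⟪f' a, v⟫ = ⟪f' (a + s • v) - f' a, v⟫ :=
      (inner_sub_left _ _ _).symm
    have h2 : ⟪f' (a + s • v) - f' a, v⟫ ≤ ‖f' (a + s • v) - f' a‖ * ‖v‖ :=
      real_inner_le_norm _ _
    have h3 : ‖f' (a + s • v) - f' a‖ ≤ L * (s * ‖v‖) := by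
      have := hlip (a + s • v) a
      simpa [norm_smul, abs_of_nonneg hs.1] using this
    have h4 : ‖f' (a + s • v) - f' a‖ * ‖v‖ ≤ L * (s * ‖v‖) * ‖v‖ :=
      mul_le_mul_of_nonneg_right h3 (norm_nonneg v)
    have h5 : L * (s * ‖v‖) * ‖v‖ = s * (L * ‖v‖ ^ 2) := by ring
    linarith
  have hval : ∫ s in (0:ℝ)..1, (⟪f' a, v⟫ + s * (L * ‖v‖ ^ 2))
      = ⟪f' a, v⟫ + L / 2 * ‖v‖ ^ 2 := by
    rw [intervalIntegral.integral_add intervalIntegrable_const hint3,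
      intervalIntegral.integral_const, intervalIntegral.integral_mul_const, integral_id]
    norm_num
    try ring
  have hFTC' : ∫ s in (0:ℝ)..1, ⟪f' (a + s • v), v⟫ = f b - f a := by
    rw [hFTC]; simp [hv]
  linarith [hFTC' ▸ hmono, hval]

/-- Subgradient inequality at the prox point. -/
lemma aux_prox_subgrad (g : E → ℝ) (hg : ConvexOn ℝ Set.univ g) {t : ℝ} (ht : 0 < t)
    (u p : E) (hmin : IsMinOn (fun z => g z + (1 / (2 * t)) * ‖z - u‖ ^ 2) Set.univ p)
    (x : E) : g p + (1 / t) * ⟪u - p, x - p⟫ ≤ g x := by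
  set C : ℝ := (1 / (2 * t)) * ‖x - p‖ ^ 2 with hCdef
  have hC : 0 ≤ C := by positivity
  set A : ℝ := g x - g p + (1 / t) * ⟪p - u, x - p⟫ with hAdef
  have key : ∀ l ∈ Set.Ioo (0:ℝ) 1, -(l * C) ≤ A := by
    intro l hl
    have hzl : p + l • (x - p) = (1 - l) • p + l • x := by module
    have hmin' := hmin (Set.mem_univ (p + l • (x - p)))
    simp only [Set.mem_setOf_eq] at hmin'
    have hconv : g (p + l • (x - p)) ≤ (1 - l) * g p + l * g x := by
      rw [hzl]
      simpa using hg.2 (Set.mem_univ p) (Set.mem_univ x)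
        (show (0:ℝ) ≤ 1 - l by linarith [hl.2]) (le_of_lt hl.1) (by ring)
    have hnorm : ‖p + l • (x - p) - u‖ ^ 2
        = ‖p - u‖ ^ 2 + 2 * (l * ⟪p - u, x - p⟫) + l ^ 2 * ‖x - p‖ ^ 2 := by
      have he : p + l • (x - p) - u = (p - u) + l • (x - p) := by abel
      rw [he, norm_add_sq_real, real_inner_smul_right, norm_smul]
      simp only [mul_pow, sq_abs, Real.norm_eq_abs]
      try ring
    have hX : 0 ≤ l * (A + l * C) := by
      have expand : l * (A + l * C)
          = ((1 - l) * g p + l * g x + (1 / (2 * t)) * ‖p + l • (x - p) - u‖ ^ 2)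
            - (g p + (1 / (2 * t)) * ‖p - u‖ ^ 2) := by
        rw [hnorm, hAdef, hCdef]
        field_simp
        ring
      rw [expand]
      linarith [hmin', hconv]
    have : (0:ℝ) ≤ A + l * C := by
      by_contra hneg
      push_neg at hneg
      nlinarith [hl.1]
    linarith
  have hA : 0 ≤ A := by
    by_contra hA
    push_neg at hA
    have hl1 : (0:ℝ) < min (1/2) (-A / (C + 1)) := by
      apply lt_min (by norm_num)
      apply div_pos (by linarith) (by positivity)
    have hl2 : min (1/2) (-A / (C + 1)) < 1 :=
      lt_of_le_of_lt (min_le_left _ _) (by norm_num)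
    have hk := key _ ⟨hl1, hl2⟩
    have hle : min (1/2) (-A / (C + 1)) ≤ -A / (C + 1) := min_le_right _ _
    have hmul : min (1/2) (-A / (C + 1)) * (C + 1) ≤ -A := by
      have hpos : (0:ℝ) < C + 1 := by linarith
      calc min (1/2) (-A / (C + 1)) * (C + 1) ≤ (-A / (C + 1)) * (C + 1) :=
            mul_le_mul_of_nonneg_right hle hpos.le
        _ = -A := div_mul_cancel₀ _ hpos.ne'
    nlinarith [hk, hmul, hl1, hC]
  have hinner : ⟪u - p, x - p⟫ = -⟪p - u, x - p⟫ := by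
    rw [show u - p = -(p - u) by abel, inner_neg_left]
  rw [hinner]
  rw [hAdef] at hA
  linarith [hA]

end Aux

set_option maxHeartbeats 2000000 in
/-- **Fundamental proximal gradient inequality (strongly convex version).** With
`G(y,t) = (1/t)(y - prox_{tg}(y - t∇f y))`, for all `x, y`:
`φ(x) - φ(y - tG(y,t)) ≥ t(1 - (L/2)t)‖G(y,t)‖² + ⟪G(y,t), x - y⟫ + (μ/2)‖x - y‖²`. -/
theorem fundamental_prox_grad_inequality
    {E : Type*} [NormedAddCommGroup E] [InnerProductSpace ℝ E] [FiniteDimensional ℝ E]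
    (f : E → ℝ) (f' : E → E) (g : E → ℝ) (μ L : ℝ) (hμ : 0 ≤ μ) (hL : 0 < L)
    (hdiff : ∀ x, HasGradientAt f (f' x) x)
    (hsc : ConvexOn ℝ Set.univ (fun z => f z - μ / 2 * ‖z‖ ^ 2))
    (hlip : ∀ x y, ‖f' x - f' y‖ ≤ L * ‖x - y‖)
    (hg : ConvexOn ℝ Set.univ g)
    (t : ℝ) (ht : 0 < t) (prox : E → E)
    (hprox : ∀ y : E, IsMinOn (fun z => g z + (1 / (2 * t)) * ‖z - y‖ ^ 2) Set.univ (prox y)) :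
    ∀ x y : E,
      (f x + g x) - (f (y - t • ((1 / t) • (y - prox (y - t • f' y))))
          + g (y - t • ((1 / t) • (y - prox (y - t • f' y)))))
        ≥ t * (1 - L / 2 * t) * ‖(1 / t) • (y - prox (y - t • f' y))‖ ^ 2
          + ⟪(1 / t) • (y - prox (y - t • f' y)), x - y⟫ + μ / 2 * ‖x - y‖ ^ 2 := by
  intro x y
  set u : E := y - t • f' y with hu
  set p : E := prox u with hp
  have hpt : y - t • ((1 / t) • (y - p)) = p := by
    rw [smul_smul, mul_one_div, div_self ht.ne', one_smul]
    abel
  rw [hpt]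
  -- scalar abbreviations
  set A : ℝ := ⟪f' y, x - y⟫ with hA
  set B : ℝ := ⟪f' y, y - p⟫ with hB
  set Ci : ℝ := ⟪y - p, x - y⟫ with hCi
  set N : ℝ := ‖y - p‖ ^ 2 with hN
  set M : ℝ := ‖x - y‖ ^ 2 with hM
  -- rewrite the G terms
  have hGnorm : ‖(1 / t) • (y - p)‖ ^ 2 = (1 / t) ^ 2 * N := by
    rw [norm_smul, mul_pow, hN]
    simp [sq_abs]
  have hGinner : ⟪(1 / t) • (y - p), x - y⟫ = (1 / t) * Ci := by
    rw [real_inner_smul_left, hCi]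
  rw [hGnorm, hGinner]
  -- strong convexity first-order inequality
  have h1 : f y + A + μ / 2 * M ≤ f x := by
    set v : E := x - y with hv
    set φ : ℝ → ℝ := fun s => f (y + s • v) - μ / 2 * ‖y + s • v‖ ^ 2 with hφ
    have hpoly : ∀ s : ℝ, μ / 2 * ‖y + s • v‖ ^ 2
        = μ / 2 * ‖y‖ ^ 2 + s * (μ * ⟪y, v⟫) + s ^ 2 * (μ / 2 * ‖v‖ ^ 2) := by
      intro s
      rw [norm_add_sq_real, real_inner_smul_right, norm_smul]
      simp only [mul_pow, sq_abs, Real.norm_eq_abs]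
      try ring
    have hd2 : HasDerivAt (fun s : ℝ => μ / 2 * ‖y + s • v‖ ^ 2) (μ * ⟪y, v⟫) 0 := by
      have : HasDerivAt (fun s : ℝ =>
          μ / 2 * ‖y‖ ^ 2 + s * (μ * ⟪y, v⟫) + s ^ 2 * (μ / 2 * ‖v‖ ^ 2))
          (μ * ⟪y, v⟫) 0 := by
        have h1' : HasDerivAt (fun s : ℝ => s * (μ * ⟪y, v⟫)) (μ * ⟪y, v⟫) 0 := by
          simpa using (hasDerivAt_id (0:ℝ)).mul_const (μ * ⟪y, v⟫)
        have h2' : HasDerivAt (fun s : ℝ => s ^ 2 * (μ / 2 * ‖v‖ ^ 2)) 0 0 := by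
          have := ((hasDerivAt_pow 2 (0:ℝ))).mul_const (μ / 2 * ‖v‖ ^ 2)
          simpa using this
        exact (((hasDerivAt_const (0:ℝ) (μ / 2 * ‖y‖ ^ 2)).add h1').add h2').congr_deriv (by ring)
      exact this.congr_of_eventuallyEq (Filter.Eventually.of_forall fun s => (hpoly s))
    have hd1 : HasDerivAt (fun s : ℝ => f (y + s • v)) ⟪f' y, v⟫ 0 := by
      have := aux_hasDerivAt_comp_line f f' hdiff y v 0
      simpa using this
    have hdφ : HasDerivAt φ (⟪f' y, v⟫ - μ * ⟪y, v⟫) 0 := hd1.sub hd2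
    have hslope : ∀ s ∈ Set.Ioo (0:ℝ) 1, (φ s - φ 0) / s ≤ φ 1 - φ 0 := by
      intro s hs
      have hzl : y + s • v = (1 - s) • y + s • x := by rw [hv]; module
      have hcv := hsc.2 (Set.mem_univ y) (Set.mem_univ x)
        (show (0:ℝ) ≤ 1 - s by linarith [hs.2]) (le_of_lt hs.1) (by ring)
      simp only at hcv
      rw [div_le_iff₀ hs.1]
      have hφs : φ s ≤ (1 - s) * (f y - μ / 2 * ‖y‖ ^ 2) + s * (f x - μ / 2 * ‖x‖ ^ 2) := by
        rw [hφ]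
        simp only
        rw [hzl]
        simpa using hcv
      have hφ0 : φ 0 = f y - μ / 2 * ‖y‖ ^ 2 := by simp [hφ]
      have hφ1 : φ 1 = f x - μ / 2 * ‖x‖ ^ 2 := by
        simp [hφ, hv]
      rw [hφ0, hφ1]
      nlinarith [hφs]
    have hD := aux_deriv_le_of_slope_le hdφ hslope
    have hφ0 : φ 0 = f y - μ / 2 * ‖y‖ ^ 2 := by simp [hφ]
    have hφ1 : φ 1 = f x - μ / 2 * ‖x‖ ^ 2 := by simp [hφ, hv]
    rw [hφ0, hφ1] at hD
    have keyn : ‖x‖ ^ 2 - ‖y‖ ^ 2 - 2 * ⟪y, v⟫ = M := by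
      rw [hM, hv, norm_sub_sq_real, inner_sub_right, real_inner_comm y x,
        real_inner_self_eq_norm_sq]
      ring
    have keyn2 := congrArg (fun r => μ / 2 * r) keyn
    have hAv : A = ⟪f' y, v⟫ := by rw [hA, hv]
    rw [hAv]
    nlinarith [hD, keyn2]
  -- descent lemma
  have h2 : f p ≤ f y - B + L / 2 * N := by
    have := aux_descent f f' hL hdiff hlip y p
    have e1 : ⟪f' y, p - y⟫ = -B := by
      rw [hB, show p - y = -(y - p) by abel, inner_neg_right]
    have e2 : ‖p - y‖ ^ 2 = N := by
      rw [hN, show p - y = -(y - p) by abel, norm_neg]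
    rw [e1, e2] at this
    linarith
  -- prox subgradient inequality
  have h3 : g p + ((1 / t) * Ci + (1 / t) * N - A - B) ≤ g x := by
    have hps := aux_prox_subgrad g hg ht u p (hprox u) x
    have e3 : ⟪u - p, x - p⟫ = Ci + N - t * A - t * B := by
      have eu : u - p = (y - p) - t • f' y := by rw [hu]; abel
      have ex : x - p = (x - y) + (y - p) := by abel
      rw [eu, ex, inner_sub_left, inner_add_right, inner_add_right, real_inner_smul_left,
        real_inner_smul_left, real_inner_self_eq_norm_sq, hA, hB, hCi, hN]
      try ring
    rw [e3] at hps
    have e4 : (1 / t) * (Ci + N - t * A - t * B) = (1 / t) * Ci + (1 / t) * N - A - B := by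
      field_simp
      try ring
    rw [e4] at hps
    exact hps
  have e5 : t * (1 - L / 2 * t) * ((1 / t) ^ 2 * N) = (1 / t) * N - L / 2 * N := by
    field_simp
  rw [e5]
  linarith [h1, h2, h3]
end

section
/- (Sublinear norm convergence of proximal gradient descent) Under the same setting, with constant step t = η/L (0 < η ≤ 1) and iterates x^{k+1} = x^k − tG(x^k, t), for every k ≥ 1: ‖G(x^k, η/L)‖² ≤ L(φ(x^0) − φ̄)/(η k). -/
open scoped RealInnerProductSpace

section PGDAux

variable {E : Type*} [NormedAddCommGroup E] [InnerProductSpace ℝ E] [CompleteSpace E]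

lemma pgd_line_deriv (f : E → ℝ) (f' : E → E) (hdiff : ∀ x, HasGradientAt f (f' x) x)
    (x d : E) (s : ℝ) :
    HasDerivAt (fun s : ℝ => f (x + s • d)) ⟪f' (x + s • d), d⟫ s := by
  have h1 : HasDerivAt (fun s : ℝ => x + s • d) d s := by
    simpa using ((hasDerivAt_id s).smul_const d).const_add x
  have h2 := (hdiff (x + s • d)).hasFDerivAt
  simpa [InnerProductSpace.toDual_apply_apply, Function.comp_def] using (h2.comp_hasDerivAt s h1)

lemma pgd_grad_ineq (f : E → ℝ) (f' : E → E) (hdiff : ∀ x, HasGradientAt f (f' x) x)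
    (hconv : ConvexOn ℝ Set.univ f) (x y : E) :
    f x + ⟪f' x, y - x⟫ ≤ f y := by
  have hc : ConvexOn ℝ Set.univ (fun s : ℝ => f (x + s • (y - x))) := by
    have h := hconv.comp_affineMap (AffineMap.lineMap x y : ℝ →ᵃ[ℝ] E)
    rw [Set.preimage_univ] at h
    have e : (fun s : ℝ => f (x + s • (y - x))) = f ∘ (AffineMap.lineMap x y : ℝ →ᵃ[ℝ] E) := by
      funext s
      simp [AffineMap.lineMap_apply, add_comm]
    rw [e]; exact h
  have hd0 : HasDerivAt (fun s : ℝ => f (x + s • (y - x))) ⟪f' x, y - x⟫ 0 := by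
    simpa using pgd_line_deriv f f' hdiff x (y - x) 0
  have := hc.le_slope_of_hasDerivAt (Set.mem_univ (0:ℝ)) (Set.mem_univ (1:ℝ)) one_pos hd0
  rw [slope_def_field] at this
  simp at this
  linarith

lemma pgd_descent (f : E → ℝ) (f' : E → E) (L : ℝ) (hL : 0 < L)
    (hdiff : ∀ x, HasGradientAt f (f' x) x)
    (hlip : ∀ x y, ‖f' x - f' y‖ ≤ L * ‖x - y‖) (x y : E) :
    f y ≤ f x + ⟪f' x, y - x⟫ + L / 2 * ‖y - x‖ ^ 2 := by
  set d := y - x with hd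
  set q : ℝ → ℝ := fun s => f (x + s • d) - s * ⟪f' x, d⟫ - L / 2 * s ^ 2 * ‖d‖ ^ 2 with hqdef
  have hderiv : ∀ s : ℝ,
      HasDerivAt q (⟪f' (x + s • d), d⟫ - ⟪f' x, d⟫ - L * s * ‖d‖ ^ 2) s := by
    intro s
    have h1 := pgd_line_deriv f f' hdiff x d s
    have h2 : HasDerivAt (fun s : ℝ => s * ⟪f' x, d⟫) ⟪f' x, d⟫ s := by
      simpa using (hasDerivAt_id s).mul_const ⟪f' x, d⟫
    have h3 : HasDerivAt (fun s : ℝ => L / 2 * s ^ 2 * ‖d‖ ^ 2)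
        (L * s * ‖d‖ ^ 2) s := by
      have h4 := ((hasDerivAt_pow 2 s).const_mul (L / 2)).mul_const (‖d‖ ^ 2)
      refine h4.congr_deriv ?_
      ring
    exact (h1.sub h2).sub h3
  have hcont : ContinuousOn q (Set.Icc 0 1) := fun s _ =>
    (hderiv s).continuousAt.continuousWithinAt
  have hmono : AntitoneOn q (Set.Icc (0:ℝ) 1) := by
    apply antitoneOn_of_deriv_nonpos (convex_Icc 0 1) hcont
    · intro s hs
      exact (hderiv s).differentiableAt.differentiableWithinAt
    · intro s hs
      rw [interior_Icc] at hs
      rw [(hderiv s).deriv]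
      have hnrm : ‖(x + s • d) - x‖ = s * ‖d‖ := by
        simp [norm_smul, abs_of_nonneg hs.1.le]
      have hl := hlip (x + s • d) x
      rw [hnrm] at hl
      have hcs : ⟪f' (x + s • d) - f' x, d⟫ ≤ ‖f' (x + s • d) - f' x‖ * ‖d‖ :=
        real_inner_le_norm _ _
      rw [inner_sub_left] at hcs
      nlinarith [norm_nonneg d, norm_nonneg (f' (x + s • d) - f' x)]
  have h01 := hmono (Set.left_mem_Icc.mpr zero_le_one) (Set.right_mem_Icc.mpr zero_le_one)
    zero_le_one
  have hxy : x + (1:ℝ) • d = y := by rw [hd]; simp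
  simp only [hqdef, hxy, zero_smul, add_zero, zero_pow, one_pow, mul_one, mul_zero,
    zero_mul, sub_zero] at h01
  simp at h01
  linarith [h01]

lemma pgd_lower (f : E → ℝ) (f' : E → E) (L : ℝ) (hL : 0 < L)
    (hdiff : ∀ x, HasGradientAt f (f' x) x) (hconv : ConvexOn ℝ Set.univ f)
    (hlip : ∀ x y, ‖f' x - f' y‖ ≤ L * ‖x - y‖) (x y : E) :
    f x + ⟪f' x, y - x⟫ + 1 / (2 * L) * ‖f' y - f' x‖ ^ 2 ≤ f y := by
  set w := f' y - f' x with hw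
  set z := y - L⁻¹ • w with hz
  have h1 := pgd_grad_ineq f f' hdiff hconv x z
  have h2 := pgd_descent f f' L hL hdiff hlip y z
  have e1 : z - x = (y - x) - L⁻¹ • w := by rw [hz]; abel
  have e2 : z - y = -(L⁻¹ • w) := by rw [hz]; abel
  have e3 : ‖z - y‖ ^ 2 = L⁻¹ ^ 2 * ‖w‖ ^ 2 := by
    rw [e2, norm_neg, norm_smul, Real.norm_eq_abs, abs_of_nonneg (by positivity : (0:ℝ) ≤ L⁻¹)]
    ring
  have e4 : ⟪f' x, z - x⟫ = ⟪f' x, y - x⟫ - L⁻¹ * ⟪f' x, w⟫ := by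
    rw [e1, inner_sub_right, real_inner_smul_right]
  have e5 : ⟪f' y, z - y⟫ = -(L⁻¹ * ⟪f' y, w⟫) := by
    rw [e2, inner_neg_right, real_inner_smul_right]
  have e6 : ⟪f' y, w⟫ - ⟪f' x, w⟫ = ‖w‖ ^ 2 := by
    rw [← inner_sub_left, ← hw, real_inner_self_eq_norm_sq]
  rw [e4] at h1
  rw [e5, e3] at h2
  have hL' : L ≠ 0 := ne_of_gt hL
  have key : L⁻¹ * ⟪f' y, w⟫ - L⁻¹ * ⟪f' x, w⟫ = L⁻¹ * ‖w‖ ^ 2 := by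
    rw [← mul_sub, e6]
  have : 1 / (2 * L) * ‖w‖ ^ 2 = L⁻¹ * ‖w‖ ^ 2 - L / 2 * (L⁻¹ ^ 2 * ‖w‖ ^ 2) := by
    field_simp
    ring
  linarith [h1, h2]

lemma pgd_coco (f : E → ℝ) (f' : E → E) (L : ℝ) (hL : 0 < L)
    (hdiff : ∀ x, HasGradientAt f (f' x) x) (hconv : ConvexOn ℝ Set.univ f)
    (hlip : ∀ x y, ‖f' x - f' y‖ ≤ L * ‖x - y‖) (x y : E) :
    ‖f' x - f' y‖ ^ 2 ≤ L * ⟪f' x - f' y, x - y⟫ := by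
  have h1 := pgd_lower f f' L hL hdiff hconv hlip x y
  have h2 := pgd_lower f f' L hL hdiff hconv hlip y x
  have e1 : ⟪f' x, y - x⟫ + ⟪f' y, x - y⟫ = -⟪f' x - f' y, x - y⟫ := by
    rw [inner_sub_left]
    have : ⟪f' x, y - x⟫ = -⟪f' x, x - y⟫ := by
      rw [← inner_neg_right]; congr 1; abel
    rw [this]; ring
  have e2 : ‖f' x - f' y‖ = ‖f' y - f' x‖ := by rw [← norm_neg]; congr 1; abel
  have hL2 : 0 < 2 * L := by linarith
  rw [e2]
  have h3 : 1 / (2*L) * ‖f' y - f' x‖ ^ 2 + 1 / (2*L) * ‖f' x - f' y‖ ^ 2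
      ≤ ⟪f' x - f' y, x - y⟫ := by linarith
  rw [e2] at h3
  have h3' : L⁻¹ * ‖f' y - f' x‖ ^ 2 ≤ ⟪f' x - f' y, x - y⟫ := by
    have : 2 * (1 / (2*L) * ‖f' y - f' x‖ ^ 2) = L⁻¹ * ‖f' y - f' x‖ ^ 2 := by
      field_simp
    linarith
  have h4 := mul_le_mul_of_nonneg_left h3' hL.le
  have h5 : L * (L⁻¹ * ‖f' y - f' x‖ ^ 2) = ‖f' y - f' x‖ ^ 2 := by field_simp
  linarith

lemma pgd_prox_ineq (g : E → ℝ) (hg : ConvexOn ℝ Set.univ g) (t : ℝ) (ht : 0 < t)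
    (p y : E) (hp : IsMinOn (fun z => g z + 1 / (2 * t) * ‖z - y‖ ^ 2) Set.univ p)
    (u : E) :
    g p + 1 / t * ⟪y - p, u - p⟫ ≤ g u := by
  have key : ∀ l : ℝ, l ∈ Set.Ioc (0:ℝ) 1 →
      1 / t * ⟪y - p, u - p⟫ ≤ g u - g p + l * (‖u - p‖ ^ 2 / (2 * t)) := by
    rintro l ⟨hl0, hl1⟩
    have hmin := isMinOn_iff.mp hp (p + l • (u - p)) (Set.mem_univ _)
    have hcvx : g (p + l • (u - p)) ≤ (1 - l) * g p + l * g u := by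
      have h := hg.2 (Set.mem_univ p) (Set.mem_univ u)
        (by linarith : (0:ℝ) ≤ 1 - l) hl0.le (by ring)
      have e : (1 - l) • p + l • u = p + l • (u - p) := by module
      rw [e] at h
      simpa using h
    have hnorm : ‖p + l • (u - p) - y‖ ^ 2
        = ‖p - y‖ ^ 2 + 2 * (l * ⟪p - y, u - p⟫) + l ^ 2 * ‖u - p‖ ^ 2 := by
      have e : p + l • (u - p) - y = (p - y) + l • (u - p) := by module
      rw [e, norm_add_sq_real, real_inner_smul_right, norm_smul, Real.norm_eq_abs,
        abs_of_nonneg hl0.le]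
      ring
    rw [hnorm] at hmin
    have hflip : ⟪p - y, u - p⟫ = -⟪y - p, u - p⟫ := by
      rw [show p - y = -(y - p) by abel, inner_neg_left]
    rw [hflip] at hmin
    -- hmin : g p + 1/(2t) * ‖p-y‖^2 ≤ g(p+l•(u-p)) + 1/(2t)*(‖p-y‖^2 - 2 l ⟪y-p,u-p⟫ + l² ‖u-p‖²)
    have h2t : (0:ℝ) < 2 * t := by linarith
    have hq : 0 ≤ l * (g u - g p) - l * (2 * (1 / (2 * t)) * ⟪y - p, u - p⟫)
        + l ^ 2 * (1 / (2 * t)) * ‖u - p‖ ^ 2 := by nlinarith [hmin, hcvx]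
    have hdiv : 0 ≤ (g u - g p) - 2 * (1 / (2 * t)) * ⟪y - p, u - p⟫
        + l * (1 / (2 * t)) * ‖u - p‖ ^ 2 := by
      nlinarith [hq, hl0, mul_pos hl0 hl0]
    have e1 : 2 * (1 / (2 * t)) = 1 / t := by field_simp
    have e2 : l * (1 / (2 * t)) * ‖u - p‖ ^ 2 = l * (‖u - p‖ ^ 2 / (2 * t)) := by ring
    rw [e1, e2] at hdiv
    linarith
  have hlim : Filter.Tendsto (fun l : ℝ => g u - g p + l * (‖u - p‖ ^ 2 / (2 * t)))
      (nhdsWithin 0 (Set.Ioi 0)) (nhds (g u - g p)) := by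
    have hc : Filter.Tendsto (fun l : ℝ => g u - g p + l * (‖u - p‖ ^ 2 / (2 * t)))
        (nhds 0) (nhds (g u - g p + 0 * (‖u - p‖ ^ 2 / (2 * t)))) := by
      exact (continuous_const.add ((continuous_id).mul continuous_const)).tendsto 0
    simpa using hc.mono_left nhdsWithin_le_nhds
  have hle : 1 / t * ⟪y - p, u - p⟫ ≤ g u - g p := by
    refine ge_of_tendsto hlim ?_
    filter_upwards [Ioc_mem_nhdsGT zero_lt_one]
      with l hl
    exact key l hl
  linarith

end PGDAux

set_option maxHeartbeats 1000000 in
/-- **Sublinear convergence of the proximal gradient mapping norm.** For step `t = η/L`,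
`0 < η ≤ 1`, and iterates `x^{k+1} = x^k - t G(x^k,t)`, for every `k ≥ 1`:
`‖G(x^k, η/L)‖² ≤ L(φ(x⁰) - φ̄)/(η k)`. -/
theorem sublinear_norm_convergence_prox_grad
    {E : Type*} [NormedAddCommGroup E] [InnerProductSpace ℝ E] [FiniteDimensional ℝ E]
    (f : E → ℝ) (f' : E → E) (g : E → ℝ) (L : ℝ) (hL : 0 < L)
    (hdiff : ∀ x, HasGradientAt f (f' x) x)
    (hconv : ConvexOn ℝ Set.univ f)
    (hlip : ∀ x y, ‖f' x - f' y‖ ≤ L * ‖x - y‖)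
    (hg : ConvexOn ℝ Set.univ g)
    (η : ℝ) (hη : 0 < η) (hη1 : η ≤ 1) (prox : E → E)
    (hprox : ∀ y : E, IsMinOn
      (fun z => g z + (1 / (2 * (η / L))) * ‖z - y‖ ^ 2) Set.univ (prox y))
    (xstar : E) (hmin : IsMinOn (fun z => f z + g z) Set.univ xstar)
    (x : ℕ → E)
    (hx : ∀ k, x (k + 1) =
      x k - (η / L) • ((L / η) • (x k - prox (x k - (η / L) • f' (x k))))) :
    ∀ k : ℕ, 1 ≤ k →
      ‖(L / η) • (x k - prox (x k - (η / L) • f' (x k)))‖ ^ 2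
        ≤ L * ((f (x 0) + g (x 0)) - (f xstar + g xstar)) / (η * k) := by
  intro k hk
  have hLne : L ≠ 0 := ne_of_gt hL
  have hηne : η ≠ 0 := ne_of_gt hη
  set t := η / L with htdef
  have ht : 0 < t := div_pos hη hL
  have htL : t * L = η := div_mul_cancel₀ η hLne
  set T : E → E := fun z => prox (z - t • f' z) with hTdef
  have hxT : ∀ n : ℕ, x (n + 1) = T (x n) := by
    intro n
    have e1 : t • ((L / η) • (x n - prox (x n - t • f' (x n))))
        = x n - prox (x n - t • f' (x n)) := by
      rw [smul_smul, show t * (L / η) = 1 by rw [htdef]; field_simp, one_smul]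
    rw [hx n, e1]
    show _ = prox (x n - t • f' (x n))
    rw [sub_sub_cancel]
  have gkey : ∀ y u : E, g (prox y) + 1 / t * ⟪y - prox y, u - prox y⟫ ≤ g u := by
    intro y u
    exact pgd_prox_ineq g hg t ht (prox y) y (hprox y) u
  have key : ∀ z : E,
      1 / t * ‖T z - T (T z)‖ ^ 2 ≤ (f z + g z) - (f (T z) + g (T z)) ∧
      ‖T z - T (T z)‖ ≤ ‖z - T z‖ := by
    intro z
    set p := T z with hpdef
    set q2 := T p with hq2def
    have hpp : p = prox (z - t • f' z) := rfl
    have hqq : q2 = prox (p - t • f' p) := rfl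
    set d := z - p with hddef
    set Δ := f' z - f' p with hΔdef
    have ha1 : f p + ⟪f' p, d⟫ ≤ f z := by
      have h := pgd_grad_ineq f f' hdiff hconv p z
      rwa [← hddef] at h
    have ha2 : g p + (1 / t * ‖d‖ ^ 2 - ⟪f' z, d⟫) ≤ g z := by
      have h := gkey (z - t • f' z) z
      rw [← hpp] at h
      have e : z - t • f' z - p = d - t • f' z := by rw [hddef]; module
      rw [e, ← hddef, inner_sub_left, real_inner_smul_left,
        real_inner_self_eq_norm_sq] at h
      have e2 : 1 / t * (‖d‖ ^ 2 - t * ⟪f' z, d⟫) = 1 / t * ‖d‖ ^ 2 - ⟪f' z, d⟫ := by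
        field_simp
      rw [e2] at h
      exact h
    have hco : ‖Δ‖ ^ 2 ≤ L * ⟪Δ, d⟫ := by
      have h := pgd_coco f f' L hL hdiff hconv hlip z p
      rwa [← hΔdef, ← hddef] at h
    have hΔd : 0 ≤ ⟪Δ, d⟫ := by
      by_contra hneg
      push_neg at hneg
      nlinarith [sq_nonneg ‖Δ‖, mul_pos hL (neg_pos.mpr hneg)]
    have hc1 := gkey (z - t • f' z) q2
    have hc2 := gkey (p - t • f' p) p
    rw [← hpp] at hc1
    rw [← hqq] at hc2
    have hsum2 : ⟪z - t • f' z - p, q2 - p⟫ + ⟪p - t • f' p - q2, p - q2⟫ ≤ 0 := by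
      by_contra hpos
      push_neg at hpos
      nlinarith [mul_pos (show (0:ℝ) < 1 / t by positivity) hpos, hc1, hc2]
    have hcomb : ⟪z - t • f' z - p, q2 - p⟫ + ⟪p - t • f' p - q2, p - q2⟫
        = ⟪(p - q2) - (d - t • Δ), p - q2⟫ := by
      have h1 : ⟪z - t • f' z - p, q2 - p⟫ = ⟪-(z - t • f' z - p), p - q2⟫ := by
        rw [show q2 - p = -(p - q2) by abel, inner_neg_right, ← inner_neg_left]
      rw [h1, ← inner_add_left]
      congr 1
      rw [hddef, hΔdef]
      module
    rw [hcomb, inner_sub_left, real_inner_self_eq_norm_sq] at hsum2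
    -- hsum2 : ‖p - q2‖^2 - ⟪d - t•Δ, p - q2⟫ ≤ 0
    have hcs := real_inner_le_norm (d - t • Δ) (p - q2)
    have hpq : ‖p - q2‖ ≤ ‖d - t • Δ‖ := by
      by_cases h0 : ‖p - q2‖ = 0
      · rw [h0]; exact norm_nonneg _
      · have h0' : 0 < ‖p - q2‖ := lt_of_le_of_ne (norm_nonneg _) (Ne.symm h0)
        nlinarith [hsum2, hcs]
    have hd2 : ‖d - t • Δ‖ ^ 2 ≤ ‖d‖ ^ 2 - t * ⟪Δ, d⟫ := by
      have expand : ‖d - t • Δ‖ ^ 2 = ‖d‖ ^ 2 - 2 * (t * ⟪Δ, d⟫) + t ^ 2 * ‖Δ‖ ^ 2 := by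
        rw [norm_sub_sq_real, real_inner_smul_right, norm_smul, Real.norm_eq_abs,
          abs_of_nonneg ht.le, real_inner_comm]
        ring
      rw [expand]
      have hη' : t * L ≤ 1 := by rw [htL]; exact hη1
      have b1 : t ^ 2 * ‖Δ‖ ^ 2 ≤ t ^ 2 * (L * ⟪Δ, d⟫) :=
        mul_le_mul_of_nonneg_left hco (by positivity)
      have b2 : t ^ 2 * (L * ⟪Δ, d⟫) = (t * L) * (t * ⟪Δ, d⟫) := by ring
      have b3 : (t * L) * (t * ⟪Δ, d⟫) ≤ 1 * (t * ⟪Δ, d⟫) :=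
        mul_le_mul_of_nonneg_right hη' (mul_nonneg ht.le hΔd)
      linarith
    constructor
    · have hA : ‖p - q2‖ ^ 2 ≤ ‖d‖ ^ 2 - t * ⟪Δ, d⟫ := by
        have := pow_le_pow_left₀ (norm_nonneg _) hpq 2
        linarith
      have hB : 1 / t * ‖p - q2‖ ^ 2 ≤ 1 / t * (‖d‖ ^ 2 - t * ⟪Δ, d⟫) :=
        mul_le_mul_of_nonneg_left hA (by positivity)
      have hC : 1 / t * (‖d‖ ^ 2 - t * ⟪Δ, d⟫) = 1 / t * ‖d‖ ^ 2 - ⟪Δ, d⟫ := by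
        field_simp
      have hD : ⟪Δ, d⟫ = ⟪f' z, d⟫ - ⟪f' p, d⟫ := by rw [hΔdef, inner_sub_left]
      linarith [ha1, ha2, hB, hC, hD]
    · have h1 : ‖d - t • Δ‖ ^ 2 ≤ ‖d‖ ^ 2 := by
        nlinarith [hd2, mul_nonneg ht.le hΔd]
      have h2 : ‖d - t • Δ‖ ≤ ‖d‖ := by
        rw [← Real.sqrt_sq (norm_nonneg (d - t • Δ)), ← Real.sqrt_sq (norm_nonneg d)]
        exact Real.sqrt_le_sqrt h1
      exact le_trans hpq h2
  -- per-step decrease along iterates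
  have hstep1 : ∀ n : ℕ, 1 / t * ‖x (n + 1) - T (x (n + 1))‖ ^ 2
      ≤ (f (x n) + g (x n)) - (f (x (n + 1)) + g (x (n + 1))) := by
    intro n
    rw [hxT n]
    exact (key (x n)).1
  have hmono : ∀ n : ℕ, ‖x (n + 1) - T (x (n + 1))‖ ≤ ‖x n - T (x n)‖ := by
    intro n
    rw [hxT n]
    exact (key (x n)).2
  have hanti : Antitone (fun n : ℕ => ‖x n - T (x n)‖) :=
    antitone_nat_of_succ_le hmono
  have hH : ∀ n : ℕ, (n : ℝ) * (1 / t * ‖x n - T (x n)‖ ^ 2)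
      ≤ (f (x 0) + g (x 0)) - (f (x n) + g (x n)) := by
    intro n
    induction n with
    | zero => simp
    | succ m ih =>
      have h1 := hstep1 m
      have h2 : ‖x (m + 1) - T (x (m + 1))‖ ^ 2 ≤ ‖x m - T (x m)‖ ^ 2 :=
        pow_le_pow_left₀ (norm_nonneg _) (hmono m) 2
      have h3 : (m : ℝ) * (1 / t * ‖x (m + 1) - T (x (m + 1))‖ ^ 2)
          ≤ (m : ℝ) * (1 / t * ‖x m - T (x m)‖ ^ 2) :=
        mul_le_mul_of_nonneg_left
          (mul_le_mul_of_nonneg_left h2 (by positivity)) (Nat.cast_nonneg m)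
      push_cast
      nlinarith [ih, h1, h3]
  have hkpos : (0 : ℝ) < (k : ℝ) := by exact_mod_cast Nat.lt_of_lt_of_le Nat.zero_lt_one hk
  have hxk : f xstar + g xstar ≤ f (x k) + g (x k) := hmin (Set.mem_univ _)
  have hmain : (k : ℝ) * (1 / t * ‖x k - T (x k)‖ ^ 2)
      ≤ f (x 0) + g (x 0) - (f xstar + g xstar) := by
    have := hH k
    linarith
  show ‖(L / η) • (x k - T (x k))‖ ^ 2 ≤ _
  have hnorm : ‖(L / η) • (x k - T (x k))‖ ^ 2 = (L / η) ^ 2 * ‖x k - T (x k)‖ ^ 2 := by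
    rw [norm_smul, Real.norm_eq_abs, abs_of_pos (div_pos hL hη)]
    ring
  rw [hnorm]
  have hut : 1 / t = L / η := by rw [htdef, one_div_div]
  rw [hut] at hmain
  rw [le_div_iff₀ (by positivity : (0:ℝ) < η * (k : ℝ))]
  have h1 : (L / η) ^ 2 * ‖x k - T (x k)‖ ^ 2 * (η * (k : ℝ))
      = L * ((k : ℝ) * (L / η * ‖x k - T (x k)‖ ^ 2)) := by
    field_simp
  rw [h1]
  exact mul_le_mul_of_nonneg_left hmain hL.le
end
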